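/- Let S be a multiplicative subset of a ring R satisfying the maximal multiple condition. If R_S is a coherent ring, then R is an S-coherent ring, i.e., every finitely generated ideal of R is S-finitely presented. -/

import Mathlib

/-- `M` is `S`-finite: some finitely generated submodule `L` satisfies `s • M ⊆ L`. -/
def IsSFinite {R : Type*} [CommRing R] (S : Submonoid R) (M : Type*) [AddCommGroup M]
    [Module R M] : Prop :=
  ∃ s ∈ S, ∃ L : Submodule R M, L.FG ∧ ∀ m : M, s • m ∈ L

/-- `M` is `S`-finitely presented: there is an exact sequence `0 → K → F → M → 0`
with `F` finitely generated free and `K` `S`-finite. -/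
def IsSFinitelyPresented {R : Type*} [CommRing R] (S : Submonoid R) (M : Type*)
    [AddCommGroup M] [Module R M] : Prop :=
  ∃ (n : ℕ) (f : (Fin n → R) →ₗ[R] M), Function.Surjective f ∧ IsSFinite S (LinearMap.ker f)

/-- `R` is `S`-coherent: every finitely generated ideal is `S`-finitely presented. -/
def IsSCoherent (R : Type*) [CommRing R] (S : Submonoid R) : Prop :=
  ∀ I : Ideal R, I.FG → IsSFinitelyPresented S I

/-- If `S` satisfies the maximal multiple condition and `R_S` is a coherent
ring, then `R` is `S`-coherent. -/
theorem stmt2 {R : Type*} [CommRing R] (S : Submonoid R)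
    (hmax : ∃ t ∈ S, ∀ s ∈ S, s ∣ t)
    (hcoh : ∀ I : Ideal (Localization S), I.FG → Module.FinitePresentation (Localization S) I) :
    IsSCoherent R S := by
  classical
  obtain ⟨t, htS, htmax⟩ := hmax
  intro I hI
  set A := Localization S
  set φ : R →+* A := algebraMap R A with hφ
  obtain ⟨n, a, ha⟩ := Submodule.fg_iff_exists_fin_generating_family.mp hI
  set g : (Fin n → R) →ₗ[R] R := Fintype.linearCombination R a with hgdef
  have hrg : LinearMap.range g = I := by
    rw [hgdef, Fintype.range_linearCombination, ha]
  set gA : (Fin n → A) →ₗ[A] A :=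
    Fintype.linearCombination A (fun i => φ (a i)) with hgAdef
  have hcomm : ∀ x : Fin n → R, gA (fun i => φ (x i)) = φ (g x) := by
    intro x
    simp only [hgAdef, hgdef, Fintype.linearCombination_apply, smul_eq_mul, ← map_mul, ← map_sum]
  -- the localized ideal
  set J : Ideal A := LinearMap.range gA with hJdef
  have hJfg : J.FG := by
    rw [hJdef, LinearMap.range_eq_map]
    exact (Module.Finite.fg_top (R := A) (M := Fin n → A)).map gA
  have hfp := hcoh J hJfg
  set π : (Fin n → A) →ₗ[A] J :=
    gA.codRestrict (J.restrictScalars A) (fun x => LinearMap.mem_range_self gA x) with hπdef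
  have hπsurj : Function.Surjective π := by
    rintro ⟨x, hx⟩
    obtain ⟨y, rfl⟩ := hx
    exact ⟨y, rfl⟩
  have hπker : (LinearMap.ker gA).FG := by
    have := Module.FinitePresentation.fg_ker π hπsurj
    have h2 : LinearMap.ker π = LinearMap.ker gA := by
      ext x
      simp only [LinearMap.mem_ker]
      exact ⟨fun h => congrArg Subtype.val h, fun h => Subtype.ext h⟩
    rwa [h2] at this
  obtain ⟨m, y, hy⟩ := Submodule.fg_iff_exists_fin_generating_family.mp hπker
  have hyker : ∀ j, gA (y j) = 0 := by
    intro j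
    have : y j ∈ LinearMap.ker gA := hy ▸ Submodule.subset_span (Set.mem_range_self j)
    exact LinearMap.mem_ker.mp this
  -- clear denominators of the generators
  obtain ⟨b, hb⟩ := IsLocalization.exist_integer_multiples_of_finite S
    (fun p : Fin m × Fin n => y p.1 p.2)
  choose w hw using fun j i => hb (j, i)
  -- hw : ∀ j i, φ (w j i) = ↑b • y j i
  have hgw : ∀ j, φ (g (w j)) = 0 := by
    intro j
    have h0 : (fun i => φ (w j i)) = φ (b : R) • y j := by
      funext i
      rw [hw j i]
      exact (algebraMap_smul A (b : R) (y j i)).symm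
    rw [← hcomm, h0, map_smul, hyker, smul_zero]
  choose u hu using fun j => (IsLocalization.map_eq_zero_iff S A _).mp (hgw j)
  set U : S := ∏ j, u j with hUdef
  set z : Fin m → (Fin n → R) := fun j => (U : R) • w j with hzdef
  have hzker : ∀ j, z j ∈ LinearMap.ker g := by
    intro j
    obtain ⟨c, hc⟩ : (u j : R) ∣ (U : R) := by
      rw [hUdef, Submonoid.coe_finset_prod]
      exact Finset.dvd_prod_of_mem _ (Finset.mem_univ j)
    rw [LinearMap.mem_ker, hzdef]
    simp only [map_smul, smul_eq_mul, hc]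
    rw [mul_comm (u j : R) c, mul_assoc, hu j, mul_zero]
  -- key claim
  have key : ∀ k ∈ LinearMap.ker g, t • k ∈ Submodule.span R (Set.range z) := by
    intro k hk
    have hkA : (fun i => φ (k i)) ∈ LinearMap.ker gA := by
      rw [LinearMap.mem_ker, hcomm, LinearMap.mem_ker.mp hk, map_zero]
    rw [← hy] at hkA
    obtain ⟨c, hc⟩ := (Submodule.mem_span_range_iff_exists_fun A).mp hkA
    obtain ⟨d, hd⟩ := IsLocalization.exist_integer_multiples_of_finite S c
    choose r hr using hd
    -- w₀ := Σ r j • w j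
    set w₀ : Fin n → R := ∑ j, r j • w j with hw₀def
    have hptwise : ∀ i, φ ((b : R) * (d : R) * k i) = φ (w₀ i) := by
      intro i
      have h1 : φ (w₀ i) = ∑ j, φ (r j) * φ (w j i) := by
        rw [hw₀def]
        simp only [Finset.sum_apply, Pi.smul_apply, smul_eq_mul, map_sum, map_mul]
      have h2 : φ ((b : R) * (d : R) * k i) = φ (b : R) * (φ (d : R) * φ (k i)) := by
        rw [map_mul, map_mul, mul_assoc]
      have h3 : φ (d : R) * φ (k i) = ∑ j, φ (r j) * y j i := by
        have : φ (k i) = ∑ j, c j * y j i := by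
          have := congrFun hc i
          simpa using this.symm
        rw [this, Finset.mul_sum]
        refine Finset.sum_congr rfl fun j _ => ?_
        rw [← mul_assoc]
        congr 1
        have := hr j
        rw [Algebra.smul_def] at this
        exact this.symm ▸ rfl
      rw [h2, h3, h1, Finset.mul_sum]
      refine Finset.sum_congr rfl fun j _ => ?_
      rw [hw j i, Algebra.smul_def, ← hφ]
      ring
    choose e he using fun i => (IsLocalization.eq_iff_exists S A).mp (hptwise i)
    set E : S := ∏ i, e i with hEdef
    have hE : ∀ i, (E : R) * ((b : R) * (d : R) * k i) = (E : R) * w₀ i := by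
      intro i
      obtain ⟨c', hc'⟩ : (e i : R) ∣ (E : R) := by
        rw [hEdef, Submonoid.coe_finset_prod]
        exact Finset.dvd_prod_of_mem _ (Finset.mem_univ i)
      rw [hc']
      linear_combination c' * he i
    -- now (U * E * b * d) • k = E • (Σ r j • z j)
    have hfin : ((U : R) * E * b * d) • k = (E : R) • ∑ j, r j • z j := by
      funext i
      simp only [Pi.smul_apply, smul_eq_mul, Finset.sum_apply, Pi.smul_apply, hzdef,
        Finset.smul_sum]
      have : ((U : R) * E * b * d) * k i = (U : R) * ((E : R) * ((b : R) * (d : R) * k i)) := by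
        ring
      rw [this, hE i]
      rw [hw₀def]
      simp only [Finset.sum_apply, Pi.smul_apply, smul_eq_mul, Finset.mul_sum]
      refine Finset.sum_congr rfl fun j _ => ?_
      ring
    obtain ⟨c₀, hc₀⟩ := htmax ((U : R) * E * b * d)
      (S.mul_mem (S.mul_mem (S.mul_mem U.2 E.2) b.2) d.2)
    have : t • k = c₀ • (((U : R) * E * b * d) • k) := by
      rw [← mul_smul, mul_comm c₀, ← hc₀]
    rw [this, hfin]
    refine Submodule.smul_mem _ _ (Submodule.smul_mem _ _ (Submodule.sum_mem _ fun j _ => ?_))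
    exact Submodule.smul_mem _ _ (Submodule.subset_span (Set.mem_range_self j))
  -- assemble
  set f : (Fin n → R) →ₗ[R] I :=
    g.codRestrict (I.restrictScalars R) (fun x => hrg ▸ LinearMap.mem_range_self g x) with hf
  refine ⟨n, f, ?_, ?_⟩
  · rintro ⟨x, hx⟩
    rw [← hrg] at hx
    obtain ⟨v, hv⟩ := hx
    exact ⟨v, Subtype.ext hv⟩
  · have hkerf : LinearMap.ker f = LinearMap.ker g := LinearMap.ker_codRestrict _ _ _
    set ζ : Fin m → LinearMap.ker f := fun j => ⟨z j, hkerf ▸ hzker j⟩ with hζdef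
    refine ⟨t, htS, Submodule.span R (Set.range ζ), Submodule.fg_span (Set.finite_range ζ), ?_⟩
    intro x
    have hx : t • (x : Fin n → R) ∈ Submodule.span R (Set.range z) :=
      key _ (hkerf ▸ x.2)
    have himg : Submodule.map (LinearMap.ker f).subtype (Submodule.span R (Set.range ζ)) =
        Submodule.span R (Set.range z) := by
      rw [Submodule.map_span]
      congr 1
      rw [← Set.range_comp]
      rfl
    rw [← himg] at hx
    obtain ⟨v, hvL, hv⟩ := hx
    have : v = t • x := Subtype.ext hv
    rwa [← this]
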